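/- There exists a constant C' > 0 such that for all y, ỹ ∈ {−1,1}^{ℤ₊} and all n ∈ ℕ, if y_i = ỹ_i for i = 0,…,n−1 then |w_0(y) − w_0(ỹ)| ≤ C'·|1−2p|^{n}; in particular the function y ↦ w_0(y) is Hölder continuous with respect to the metric d(y,ỹ) = 2^{−k(y,ỹ)}, where k(y,ỹ) is the length of the longest common prefix of y and ỹ. -/

import Mathlib

/-- There exists `C' > 0` such that for all `y, ỹ ∈ {−1,1}^{ℤ₊}` and all
`n ∈ ℕ`, if `y_i = ỹ_i` for `i = 0,…,n−1` then `|w_0(y) − w_0(ỹ)| ≤ C'·|1−2p|^n`;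
in particular `y ↦ w_0(y)` is Hölder continuous with respect to the metric
`d(y,ỹ) = 2^{−k(y,ỹ)}` where `k(y,ỹ)` is the length of the longest common prefix
(the Hölder estimate is expressed via that exact prefix length `n`, for which
`d(y,ỹ) = (1/2)^n`). Here `W y n i = w_i^{(n)}(y)` and `w0 y = w_0(y)`. -/
theorem stmt_6 (p ε : ℝ) (hp0 : 0 < p) (hp1 : p < 1) (hp2 : p ≠ 1 / 2)
    (hε0 : 0 < ε) (hε1 : ε < 1)
    (J K : ℝ)
    (hJ : J = (1 / 2) * Real.log ((1 - p) / p))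
    (hK : K = (1 / 2) * Real.log ((1 - ε) / ε))
    (A : ℝ → ℝ)
    (hA : ∀ u, A u = (1 / 2) * Real.log (Real.cosh (u + J) / Real.cosh (u - J)))
    (W : (ℕ → ℝ) → ℕ → ℕ → ℝ)
    (hW0 : ∀ (y : ℕ → ℝ) (n i : ℕ), n < i → W y n i = 0)
    (hWrec : ∀ (y : ℕ → ℝ) (n i : ℕ), i ≤ n → W y n i = K * y i + A (W y n (i + 1)))
    (w0 : (ℕ → ℝ) → ℝ)
    (hw0 : ∀ y : ℕ → ℝ, (∀ i, y i = 1 ∨ y i = -1) →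
      Filter.Tendsto (fun n => W y n 0) Filter.atTop (nhds (w0 y))) :
    ∃ C' > (0 : ℝ),
      (∀ y ytil : ℕ → ℝ, (∀ i, y i = 1 ∨ y i = -1) → (∀ i, ytil i = 1 ∨ ytil i = -1) →
        ∀ n : ℕ, (∀ i < n, y i = ytil i) →
          |w0 y - w0 ytil| ≤ C' * |1 - 2 * p| ^ n) ∧
      ∃ θ > (0 : ℝ), ∃ C'' > (0 : ℝ),
        ∀ y ytil : ℕ → ℝ, (∀ i, y i = 1 ∨ y i = -1) → (∀ i, ytil i = 1 ∨ ytil i = -1) →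
          ∀ n : ℕ, (∀ i < n, y i = ytil i) → y n ≠ ytil n →
            |w0 y - w0 ytil| ≤ C'' * ((1 / 2 : ℝ) ^ n) ^ θ := by
  -- tanh J = 1 - 2p
  have htanh : Real.tanh J = 1 - 2 * p := by
    have hfrac : 0 < (1 - p) / p := div_pos (by linarith) hp0
    have hE : Real.exp J * Real.exp J = (1 - p) / p := by
      rw [← Real.exp_add, hJ, show (1/2) * Real.log ((1-p)/p) + (1/2) * Real.log ((1-p)/p)
        = Real.log ((1-p)/p) by ring, Real.exp_log hfrac]
    have hEpos := Real.exp_pos J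
    rw [Real.tanh_eq_sinh_div_cosh, Real.sinh_eq, Real.cosh_eq, Real.exp_neg]
    rw [div_eq_iff (by positivity)]
    have h2 : Real.exp J * Real.exp J * p = 1 - p := by
      field_simp at hE; linarith [hE]
    field_simp
    nlinarith [h2, hEpos]
  set ρ : ℝ := |1 - 2 * p| with hρdef
  have hρ0 : 0 < ρ := by
    apply abs_pos.mpr
    intro h
    exact hp2 (by linarith)
  have hρ1 : ρ < 1 := by
    rw [hρdef, abs_lt]
    constructor <;> linarith
  -- A is ρ-Lipschitz
  have hAlip : ∀ u v : ℝ, |A u - A v| ≤ ρ * |u - v| := by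
    have hder : ∀ u : ℝ, HasDerivAt A
        ((1/2) * (Real.tanh (u + J) - Real.tanh (u - J))) u := by
      intro u
      have c1 : Real.cosh (u + J) ≠ 0 := (Real.cosh_pos _).ne'
      have c2 : Real.cosh (u - J) ≠ 0 := (Real.cosh_pos _).ne'
      have h1 : HasDerivAt (fun x : ℝ => Real.cosh (x + J)) (Real.sinh (u + J)) u := by
        have := (Real.hasDerivAt_cosh (u + J)).comp u ((hasDerivAt_id u).add_const J)
        simp only [Function.comp_def, mul_one] at this
        exact this
      have h2 : HasDerivAt (fun x : ℝ => Real.cosh (x - J)) (Real.sinh (u - J)) u := by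
        have := (Real.hasDerivAt_cosh (u - J)).comp u ((hasDerivAt_id u).sub_const J)
        simp only [Function.comp_def, mul_one] at this
        exact this
      have h3 := ((h1.log c1).sub (h2.log c2)).const_mul (1/2 : ℝ)
      have heq : A = fun x : ℝ =>
          (1/2) * (Real.log (Real.cosh (x + J)) - Real.log (Real.cosh (x - J))) := by
        funext x
        rw [hA, Real.log_div (Real.cosh_pos _).ne' (Real.cosh_pos _).ne']
      rw [heq]
      exact h3.congr_deriv (by rw [Real.tanh_eq_sinh_div_cosh, Real.tanh_eq_sinh_div_cosh])
    have hbd : ∀ u : ℝ, |(1/2) * (Real.tanh (u + J) - Real.tanh (u - J))| ≤ ρ := by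
      intro u
      have ca : (0:ℝ) < Real.cosh (u + J) := Real.cosh_pos _
      have cb : (0:ℝ) < Real.cosh (u - J) := Real.cosh_pos _
      have cJ : (0:ℝ) < Real.cosh J := Real.cosh_pos _
      have e1 : Real.cosh (2 * u) = Real.cosh (u + J) * Real.cosh (u - J)
          + Real.sinh (u + J) * Real.sinh (u - J) := by
        rw [show (2:ℝ) * u = (u + J) + (u - J) by ring]; exact Real.cosh_add _ _
      have e2 : Real.cosh (2 * J) = Real.cosh (u + J) * Real.cosh (u - J)
          - Real.sinh (u + J) * Real.sinh (u - J) := by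
        rw [show (2:ℝ) * J = (u + J) - (u - J) by ring]; exact Real.cosh_sub _ _
      have hge : Real.cosh J ^ 2 ≤ Real.cosh (u + J) * Real.cosh (u - J) := by
        have h1 := Real.one_le_cosh (2 * u)
        have h2 : Real.cosh (2 * J) = 2 * Real.cosh J ^ 2 - 1 := by
          rw [Real.cosh_two_mul, Real.cosh_sq]; ring
        nlinarith
      have es : Real.sinh (2 * J) = Real.sinh (u + J) * Real.cosh (u - J)
          - Real.cosh (u + J) * Real.sinh (u - J) := by
        rw [show (2:ℝ) * J = (u + J) - (u - J) by ring]; exact Real.sinh_sub _ _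
      have hdiff : Real.tanh (u + J) - Real.tanh (u - J)
          = Real.sinh (2 * J) / (Real.cosh (u + J) * Real.cosh (u - J)) := by
        rw [Real.tanh_eq_sinh_div_cosh, Real.tanh_eq_sinh_div_cosh, es]
        field_simp
      rw [hρdef, ← htanh]
      rw [hdiff, abs_mul, abs_div (Real.sinh (2*J)) (Real.cosh (u + J) * Real.cosh (u - J)),
        abs_of_pos (mul_pos ca cb),
        show |(1:ℝ)/2| = 1/2 from by norm_num,
        Real.tanh_eq_sinh_div_cosh, abs_div (Real.sinh J) (Real.cosh J), abs_of_pos cJ]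
      have hs2 : |Real.sinh (2 * J)| = 2 * |Real.sinh J| * Real.cosh J := by
        rw [Real.sinh_two_mul, abs_mul, abs_mul, abs_of_pos cJ,
          show |(2:ℝ)| = 2 from by norm_num]
      rw [hs2, show (1:ℝ)/2 * (2 * |Real.sinh J| * Real.cosh J /
          (Real.cosh (u + J) * Real.cosh (u - J)))
        = (|Real.sinh J| * Real.cosh J) / (Real.cosh (u + J) * Real.cosh (u - J)) from by ring,
        div_le_div_iff₀ (mul_pos ca cb) cJ]
      nlinarith [abs_nonneg (Real.sinh J), hge, cJ]
    intro u v
    have := Convex.norm_image_sub_le_of_norm_hasDerivWithin_le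
      (f := A) (f' := fun u => (1/2) * (Real.tanh (u + J) - Real.tanh (u - J)))
      (s := Set.univ) (fun x _ => (hder x).hasDerivWithinAt)
      (fun x _ => by rw [Real.norm_eq_abs]; exact hbd x) convex_univ
      (Set.mem_univ v) (Set.mem_univ u)
    rw [Real.norm_eq_abs, Real.norm_eq_abs] at this
    exact this
  -- uniform bound
  set S : ℝ := (2 * |K| + 1) / (1 - ρ) with hSdef
  have hS0 : 0 < S := by
    apply div_pos (by positivity) (by linarith)
  have hSkey : 2 * |K| + ρ * S ≤ S := by
    have h : S * (1 - ρ) = 2 * |K| + 1 := by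
      rw [hSdef, div_mul_cancel₀]
      linarith
    nlinarith
  have hunif : ∀ y ytil : ℕ → ℝ, (∀ i, y i = 1 ∨ y i = -1) →
      (∀ i, ytil i = 1 ∨ ytil i = -1) →
      ∀ m i : ℕ, |W y m i - W ytil m i| ≤ S := by
    intro y ytil hy hyt
    suffices h : ∀ k m i : ℕ, m < i + k → |W y m i - W ytil m i| ≤ S by
      intro m i
      exact h (m + 1) m i (by omega)
    intro k
    induction k with
    | zero =>
      intro m i h
      rw [hW0 y m i (by omega), hW0 ytil m i (by omega)]
      simpa using hS0.le
    | succ k ih =>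
      intro m i h
      by_cases hi : m < i
      · rw [hW0 y m i hi, hW0 ytil m i hi]
        simpa using hS0.le
      · have hile : i ≤ m := by omega
        rw [hWrec y m i hile, hWrec ytil m i hile]
        have hy2 : |y i - ytil i| ≤ 2 := by
          rcases hy i with h1 | h1 <;> rcases hyt i with h2 | h2 <;>
            rw [h1, h2] <;> norm_num
        have hAd := hAlip (W y m (i + 1)) (W ytil m (i + 1))
        have hIH : |W y m (i + 1) - W ytil m (i + 1)| ≤ S := ih m (i + 1) (by omega)
        have heq : K * y i + A (W y m (i + 1)) - (K * ytil i + A (W ytil m (i + 1)))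
            = K * (y i - ytil i) + (A (W y m (i + 1)) - A (W ytil m (i + 1))) := by ring
        rw [heq]
        calc |K * (y i - ytil i) + (A (W y m (i + 1)) - A (W ytil m (i + 1)))|
            ≤ |K * (y i - ytil i)| + |A (W y m (i + 1)) - A (W ytil m (i + 1))| := abs_add_le _ _
          _ ≤ |K| * 2 + ρ * S := by
              rw [abs_mul]
              have h1 : |K| * |y i - ytil i| ≤ |K| * 2 :=
                mul_le_mul_of_nonneg_left hy2 (abs_nonneg K)
              have h2 : |A (W y m (i + 1)) - A (W ytil m (i + 1))|
                  ≤ ρ * S := le_trans hAd (mul_le_mul_of_nonneg_left hIH hρ0.le)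
              linarith
          _ ≤ S := by linarith
  -- geometric decay along common prefix
  have hdecay : ∀ y ytil : ℕ → ℝ, (∀ i, y i = 1 ∨ y i = -1) →
      (∀ i, ytil i = 1 ∨ ytil i = -1) →
      ∀ n : ℕ, (∀ i < n, y i = ytil i) →
      ∀ m : ℕ, n ≤ m → |W y m 0 - W ytil m 0| ≤ ρ ^ n * S := by
    intro y ytil hy hyt n hagree m hnm
    have haux : ∀ j : ℕ, j ≤ n → |W y m (n - j) - W ytil m (n - j)| ≤ ρ ^ j * S := by
      intro j
      induction j with
      | zero =>
        intro _
        simpa using hunif y ytil hy hyt m n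
      | succ j ih =>
        intro hjn
        have hi_lt : n - (j + 1) < n := by omega
        have hile : n - (j + 1) ≤ m := by omega
        have hsucc : n - (j + 1) + 1 = n - j := by omega
        rw [hWrec y m _ hile, hWrec ytil m _ hile]
        have heq : K * y (n - (j + 1)) + A (W y m (n - (j + 1) + 1))
            - (K * ytil (n - (j + 1)) + A (W ytil m (n - (j + 1) + 1)))
            = A (W y m (n - (j + 1) + 1)) - A (W ytil m (n - (j + 1) + 1)) := by
          rw [hagree _ hi_lt]; ring
        rw [heq, hsucc]
        calc |A (W y m (n - j)) - A (W ytil m (n - j))|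
            ≤ ρ * |W y m (n - j) - W ytil m (n - j)| := hAlip _ _
          _ ≤ ρ * (ρ ^ j * S) :=
              mul_le_mul_of_nonneg_left (ih (by omega)) hρ0.le
          _ = ρ ^ (j + 1) * S := by ring
    have := haux n le_rfl
    simpa using this
  -- pass to the limit
  have hmain : ∀ y ytil : ℕ → ℝ, (∀ i, y i = 1 ∨ y i = -1) →
      (∀ i, ytil i = 1 ∨ ytil i = -1) →
      ∀ n : ℕ, (∀ i < n, y i = ytil i) → |w0 y - w0 ytil| ≤ S * ρ ^ n := by
    intro y ytil hy hyt n hagree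
    have hl : Filter.Tendsto (fun m => |W y m 0 - W ytil m 0|) Filter.atTop
        (nhds |w0 y - w0 ytil|) := ((hw0 y hy).sub (hw0 ytil hyt)).abs
    apply le_of_tendsto hl
    filter_upwards [Filter.eventually_ge_atTop n] with m hm
    have := hdecay y ytil hy hyt n hagree m hm
    linarith
  refine ⟨S, hS0, fun y ytil hy hyt n hagree => hmain y ytil hy hyt n hagree, ?_⟩
  refine ⟨Real.logb (1/2) ρ,
    Real.logb_pos_of_base_lt_one (by norm_num) (by norm_num) hρ0 hρ1,
    S, hS0, ?_⟩
  intro y ytil hy hyt n hagree _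
  have hpow : ((1/2 : ℝ) ^ n) ^ (Real.logb (1/2) ρ) = ρ ^ n := by
    rw [← Real.rpow_natCast (1/2 : ℝ) n, ← Real.rpow_mul (by norm_num),
      mul_comm, Real.rpow_mul (by norm_num),
      Real.rpow_logb (by norm_num) (by norm_num) hρ0, Real.rpow_natCast]
  rw [hpow]
  exact hmain y ytil hy hyt n hagree
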